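/- Let V be a real inner product space of dimension 2n+1 (n ≥ 1) equipped with an almost contact metric structure (φ, ξ, η), let κ, μ be real numbers, and let h be a linear endomorphism of V with hξ = 0, hφ = −φh, and h∘h = (κ−1)·φ∘φ. Define the endomorphism Q by Qx = [2(n−1) − nμ]x + [2(n−1) + μ]h x + [2(1−n) + n(2κ+μ)]η(x)ξ. If Qφ + φQ − φQh − hQφ = 4nκ·φ, then μ(n+1) = κ(μ−2). -/

import Mathlib

open RealInnerProductSpace

/-- On a real inner product space of dimension 2n+1 (n ≥ 1) with an
almost contact metric structure (φ, ξ, η), let κ, μ ∈ ℝ and h a linear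
endomorphism with hξ = 0, hφ = −φh, h² = (κ−1)φ². Define
Qx = [2(n−1) − nμ]x + [2(n−1) + μ]hx + [2(1−n) + n(2κ+μ)]η(x)ξ.
If Qφ + φQ − φQh − hQφ = 4nκφ, then μ(n+1) = κ(μ−2). -/
theorem stmt_6 {V : Type*} [NormedAddCommGroup V] [InnerProductSpace ℝ V]
    [FiniteDimensional ℝ V] (n : ℕ) (hn : 1 ≤ n)
    (hdim : Module.finrank ℝ V = 2 * n + 1)
    (φ : V →ₗ[ℝ] V) (ξ : V)
    (hηξ : ⟪ξ, ξ⟫ = 1)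
    (hφ2 : ∀ x : V, φ (φ x) = -x + ⟪x, ξ⟫ • ξ)
    (hmet : ∀ x y : V, ⟪φ x, φ y⟫ = ⟪x, y⟫ - ⟪x, ξ⟫ * ⟪y, ξ⟫)
    (κ μ : ℝ) (h : V →ₗ[ℝ] V)
    (hhξ : h ξ = 0)
    (hhφ : h ∘ₗ φ = -(φ ∘ₗ h))
    (hh2 : h ∘ₗ h = (κ - 1) • (φ ∘ₗ φ))
    (Q : V →ₗ[ℝ] V)
    (hQ : ∀ x : V, Q x = (2 * ((n : ℝ) - 1) - (n : ℝ) * μ) • x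
        + (2 * ((n : ℝ) - 1) + μ) • h x
        + (2 * (1 - (n : ℝ)) + (n : ℝ) * (2 * κ + μ)) • (⟪x, ξ⟫ • ξ))
    (heq : Q ∘ₗ φ + φ ∘ₗ Q - φ ∘ₗ Q ∘ₗ h - h ∘ₗ Q ∘ₗ φ
        = (4 * (n : ℝ) * κ) • φ) :
    μ * ((n : ℝ) + 1) = κ * (μ - 2) := by
  -- φ ξ = 0
  have hφξ : φ ξ = 0 := by
    have := hmet ξ ξ
    rw [hηξ] at this
    have h0 : ⟪φ ξ, φ ξ⟫ = 0 := by linarith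
    exact inner_self_eq_zero.mp h0
  -- ξ ≠ 0
  have hξ0 : ξ ≠ 0 := by
    intro hc
    rw [hc, inner_zero_left] at hηξ
    norm_num at hηξ
  -- find nonzero x ⊥ ξ
  haveI : Fact (Module.finrank ℝ V = 2 * n + 1) := ⟨hdim⟩
  have hfr : Module.finrank ℝ ((ℝ ∙ ξ)ᗮ : Submodule ℝ V) = 2 * n :=
    Submodule.finrank_orthogonal_span_singleton hξ0
  have hpos : 0 < Module.rank ℝ ((ℝ ∙ ξ)ᗮ : Submodule ℝ V) := by
    rw [← Module.finrank_eq_rank, hfr]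
    exact_mod_cast by omega
  obtain ⟨x, hxmem, hx0⟩ := exists_mem_ne_zero_of_rank_pos hpos
  have hxξ : ⟪x, ξ⟫ = 0 := by
    have := hxmem ξ (Submodule.mem_span_singleton_self ξ)
    rwa [real_inner_comm] at this
  -- φ x ≠ 0
  have hφx0 : φ x ≠ 0 := by
    intro hc
    have := hφ2 x
    rw [hc, map_zero, hxξ, zero_smul, add_zero] at this
    exact hx0 (by rw [← neg_neg x, ← this, neg_zero])
  -- evaluate heq at x
  have hEx := LinearMap.ext_iff.mp heq x
  simp only [LinearMap.add_apply, LinearMap.sub_apply, LinearMap.comp_apply,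
    LinearMap.smul_apply] at hEx
  -- rewrite everything
  have hhφx : ∀ y : V, h (φ y) = -(φ (h y)) := fun y => by
    have := LinearMap.ext_iff.mp hhφ y
    simpa using this
  have hh2x : ∀ y : V, h (h y) = (κ - 1) • φ (φ y) := fun y => by
    have := LinearMap.ext_iff.mp hh2 y
    simpa using this
  have hηφ : ∀ y : V, ⟪φ y, ξ⟫ = 0 := by
    intro y
    -- f(φ y) = 0
    have hfφ : ⟪φ (φ y), ξ⟫ = 0 := by
      rw [hφ2 y]
      simp [inner_add_left, inner_smul_left, hηξ, - real_inner_self_eq_norm_sq, - inner_self_eq_norm_sq_to_K]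
    -- key: ⟪y, φ(φ y)⟫ + ⟪φ y, φ y⟫ = ⟪y,ξ⟫ * ⟪φ(φ y),ξ⟫ + ⟪φ y, ξ⟫^2 ... derive via hmet y (φ y)
    have e1 := hmet y (φ y)
    rw [hφ2 y] at e1
    -- e1 : ⟪φ y, -y + ⟪y,ξ⟫•ξ⟫ = ⟪y, φ y⟫ - ⟪y,ξ⟫ * ⟪φ y, ξ⟫
    -- also hmet y y : ⟪φ y, φ y⟫ = ⟪y,y⟫ - ⟪y,ξ⟫^2
    have e2 := hmet y y
    -- use relation (*) : from hmet y (φ z) generally; here compute f(y)^2 = 0: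
    -- from e1: ⟪φ y, -y⟫ + ⟪y,ξ⟫*⟪φ y,ξ⟫ = ⟪y,φ y⟫ - ⟪y,ξ⟫*⟪φ y,ξ⟫
    have e1' : -⟪φ y, y⟫ + ⟪y,ξ⟫ * ⟪φ y, ξ⟫ = ⟪y, φ y⟫ - ⟪y,ξ⟫ * ⟪φ y, ξ⟫ := by
      rw [← e1]
      simp [inner_add_right, inner_smul_right, mul_comm]
    -- so ⟪y, φ y⟫ = ⟪y,ξ⟫ * ⟪φ y, ξ⟫ using real_inner_comm
    have e3 : ⟪y, φ y⟫ = ⟪y,ξ⟫ * ⟪φ y, ξ⟫ := by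
      rw [real_inner_comm y (φ y)] at e1'
      linarith
    -- now hmet (φ y) (φ y)?? we need f(y)^2. Use hmet y (φ y) gave e3. Now apply the (*) trick with x := φ y, y := y:
    have e4 := hmet (φ y) (φ y)
    -- ⟪φ(φy), φ(φy)⟫ = ⟪φ y, φ y⟫ - ⟪φ y, ξ⟫^2
    rw [hφ2 y] at e4
    -- LHS = ⟪-y + ⟪y,ξ⟫•ξ, -y + ⟪y,ξ⟫•ξ⟫ = ⟪y,y⟫ - 2⟪y,ξ⟫^2 + ⟪y,ξ⟫^2⟪ξ,ξ⟫ = ⟪y,y⟫ - ⟪y,ξ⟫^2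
    have e4' : ⟪y,y⟫ - ⟪y,ξ⟫^2 = ⟪φ y, φ y⟫ - ⟪φ y, ξ⟫ * ⟪φ y, ξ⟫ := by
      rw [← e4]
      simp [inner_add_left, inner_add_right, inner_smul_left, inner_smul_right, hηξ, - real_inner_self_eq_norm_sq, - inner_self_eq_norm_sq_to_K,
        real_inner_comm y ξ]
      ring
    have : ⟪φ y, ξ⟫ * ⟪φ y, ξ⟫ = 0 := by
      rw [e2] at e4'
      nlinarith [e4']
    exact (mul_self_eq_zero).mp this
  -- now expand hEx
  rw [hQ (φ x), hQ x, hQ (h x)] at hEx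
  simp only [map_add, map_smul, map_neg, hhφx, hh2x, hφξ, hhξ, hηφ, hxξ, hφ2,
    smul_zero, zero_smul, add_zero, smul_neg, neg_neg] at hEx
  -- hEx should now be a linear combination of φ x and φ (h x) equalling (4nκ) • φ x
  replace hEx : ((2 * ((n:ℝ) - 1) - (n:ℝ) * μ) + (2 * ((n:ℝ) - 1) - (n:ℝ) * μ) + (2 * ((n:ℝ) - 1) + μ) * (κ - 1) + (2 * ((n:ℝ) - 1) + μ) * (κ - 1) - 4 * (n:ℝ) * κ) • φ x = 0 := by
    linear_combination (norm := module) hEx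
  rcases smul_eq_zero.mp hEx with hc | hc
  · -- scalar factor zero
    push_cast at hc ⊢
    nlinarith [hc]
  · exact absurd hc hφx0
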